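/- Let A,B > 0 and a,b,c,d ∈ ℝ with a > 0, d > 0, b < 0, and c < 0. If f(t) := 1 − A t^a(1−t)^b − B t^c(1−t)^d has no degenerate roots in (0,1), then f has fewer than 6 roots in the open interval (0,1). -/

import Mathlib

open Real Set

private lemma rolle_chain_aux {g : ℝ → ℝ} {n : ℕ}
    (hg : ∀ x ∈ Set.Ioo (0:ℝ) 1, ContinuousAt g x)
    (x : Fin (n+1) → ℝ) (hmono : StrictMono x)
    (hmem : ∀ i, x i ∈ Set.Ioo (0:ℝ) 1) (hz : ∀ i, g (x i) = 0) :
    ∃ y : Fin n → ℝ, StrictMono y ∧ (∀ i, y i ∈ Set.Ioo (0:ℝ) 1) ∧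
      ∀ i, deriv g (y i) = 0 := by
  have key : ∀ i : Fin n, ∃ y ∈ Set.Ioo (x i.castSucc) (x i.succ), deriv g y = 0 := by
    intro i
    refine exists_deriv_eq_zero (hmono (Fin.castSucc_lt_succ : i.castSucc < i.succ)) ?_ (by rw [hz, hz])
    have hsub : Set.Icc (x i.castSucc) (x i.succ) ⊆ Set.Ioo (0:ℝ) 1 := fun z hz =>
      ⟨lt_of_lt_of_le (hmem _).1 hz.1, lt_of_le_of_lt hz.2 (hmem _).2⟩
    exact fun z hzi => (hg z (hsub hzi)).continuousWithinAt
  choose y hy hzero using key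
  refine ⟨y, ?_, ?_, hzero⟩
  · intro i j hij
    have h1 : y i < x i.succ := (hy i).2
    have h2 : x j.castSucc < y j := (hy j).1
    have h3 : x i.succ ≤ x j.castSucc := by
      apply hmono.monotone
      simp only [Fin.le_def, Fin.val_succ, Fin.coe_castSucc]
      exact hij
    linarith
  · intro i
    exact ⟨lt_trans (hmem i.castSucc).1 (hy i).1, lt_trans (hy i).2 (hmem i.succ).2⟩

/-- Case G: `a, d > 0` and `b, c < 0`.
If `f(t) = 1 − A t^a (1−t)^b − B t^c (1−t)^d` has no degenerate roots in `(0,1)`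
(a root `ζ` is degenerate if `f ζ = 0` and `f' ζ = 0`), then `f` has fewer than 6
roots in `(0,1)`.  (`^` is `Real.rpow`.) -/
theorem fewer_than_six_roots_case_G
    (a b c d A B : ℝ) (hA : 0 < A) (hB : 0 < B)
    (ha : 0 < a) (hd : 0 < d) (hb : b < 0) (hc : c < 0)
    (f : ℝ → ℝ)
    (hf : f = fun t : ℝ => 1 - A * t ^ a * (1 - t) ^ b - B * t ^ c * (1 - t) ^ d)
    (hnd : ∀ t ∈ Set.Ioo (0 : ℝ) 1, f t = 0 → deriv f t ≠ 0) :
    {t ∈ Set.Ioo (0 : ℝ) 1 | f t = 0}.encard < 6 := by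
  classical
  -- positivity of the linear factors
  have hL : ∀ t ∈ Set.Ioo (0:ℝ) 1, 0 < a - (a+b)*t ∧ 0 < (c+d)*t - c := by
    intro t ⟨ht1, ht2⟩
    exact ⟨by nlinarith, by nlinarith⟩
  -- derivative of f
  have hderiv : ∀ t ∈ Set.Ioo (0:ℝ) 1, HasDerivAt f
      (t ^ (c-1) * (1-t) ^ (d-1) *
        (B * ((c+d)*t - c) - A * t^(a-c) * (1-t)^(b-d) * (a - (a+b)*t))) t := by
    intro t ht
    obtain ⟨ht1, ht2⟩ := ht
    have h1t : 0 < 1 - t := by linarith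
    have hinner : HasDerivAt (fun s : ℝ => 1 - s) (-1) t := by
      simpa using (hasDerivAt_id t).const_sub 1
    have hta : HasDerivAt (fun s : ℝ => s ^ a) (a * t ^ (a-1)) t :=
      Real.hasDerivAt_rpow_const (Or.inl ht1.ne')
    have htc : HasDerivAt (fun s : ℝ => s ^ c) (c * t ^ (c-1)) t :=
      Real.hasDerivAt_rpow_const (Or.inl ht1.ne')
    have h1b : HasDerivAt (fun s : ℝ => (1-s) ^ b) (b * (1-t) ^ (b-1) * (-1)) t :=
      (Real.hasDerivAt_rpow_const (p := b) (Or.inl h1t.ne')).comp t hinner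
    have h1d : HasDerivAt (fun s : ℝ => (1-s) ^ d) (d * (1-t) ^ (d-1) * (-1)) t :=
      (Real.hasDerivAt_rpow_const (p := d) (Or.inl h1t.ne')).comp t hinner
    have H1 : HasDerivAt (fun s : ℝ => A * s ^ a * (1-s) ^ b)
        (A * (a * t ^ (a-1)) * (1-t) ^ b + A * t ^ a * (b * (1-t) ^ (b-1) * (-1))) t :=
      (hta.const_mul A).mul h1b
    have H2 : HasDerivAt (fun s : ℝ => B * s ^ c * (1-s) ^ d)
        (B * (c * t ^ (c-1)) * (1-t) ^ d + B * t ^ c * (d * (1-t) ^ (d-1) * (-1))) t :=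
      (htc.const_mul B).mul h1d
    have Hf : HasDerivAt f
        (0 - (A * (a * t ^ (a-1)) * (1-t) ^ b + A * t ^ a * (b * (1-t) ^ (b-1) * (-1)))
           - (B * (c * t ^ (c-1)) * (1-t) ^ d + B * t ^ c * (d * (1-t) ^ (d-1) * (-1)))) t := by
      rw [hf]
      exact ((hasDerivAt_const t (1:ℝ)).sub H1).sub H2
    convert Hf using 1
    have ea1 : t ^ (a-1) = t ^ (c-1) * t ^ (a-c) := by
      rw [← Real.rpow_add ht1]; ring_nf
    have ea : t ^ a = t ^ (a-1) * t := by
      rw [show a = (a-1)+1 by ring, Real.rpow_add_one ht1.ne']; ring_nf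
    have ec : t ^ c = t ^ (c-1) * t := by
      rw [show c = (c-1)+1 by ring, Real.rpow_add_one ht1.ne']; ring_nf
    have eb1 : (1-t) ^ (b-1) = (1-t) ^ (d-1) * (1-t) ^ (b-d) := by
      rw [← Real.rpow_add h1t]; ring_nf
    have eb : (1-t) ^ b = (1-t) ^ (b-1) * (1-t) := by
      rw [show b = (b-1)+1 by ring, Real.rpow_add_one h1t.ne']; ring_nf
    have ed : (1-t) ^ d = (1-t) ^ (d-1) * (1-t) := by
      rw [show d = (d-1)+1 by ring, Real.rpow_add_one h1t.ne']; ring_nf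
    rw [ea, ec, eb, ed, ea1, eb1]
    ring
  -- the logarithmic comparison function
  set H : ℝ → ℝ := fun t => Real.log A + (a-c) * Real.log t + (b-d) * Real.log (1-t)
      + Real.log (a - (a+b)*t) - Real.log B - Real.log ((c+d)*t - c) with hHdef
  -- a zero of `deriv f` is a zero of `H`
  have step1 : ∀ t ∈ Set.Ioo (0:ℝ) 1, deriv f t = 0 → H t = 0 := by
    intro t ht hdf
    obtain ⟨ht1, ht2⟩ := ht
    have h1t : 0 < 1 - t := by linarith
    obtain ⟨hL1, hL2⟩ := hL t ⟨ht1, ht2⟩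
    have hrp1 : (0:ℝ) < t ^ (a-c) := Real.rpow_pos_of_pos ht1 _
    have hrp2 : (0:ℝ) < (1-t) ^ (b-d) := Real.rpow_pos_of_pos h1t _
    have hdval := (hderiv t ⟨ht1, ht2⟩).deriv
    rw [hdf] at hdval
    have hfac : (0:ℝ) < t ^ (c-1) * (1-t) ^ (d-1) :=
      mul_pos (Real.rpow_pos_of_pos ht1 _) (Real.rpow_pos_of_pos h1t _)
    have heq : B * ((c+d)*t - c) = A * t^(a-c) * (1-t)^(b-d) * (a - (a+b)*t) := by
      rcases mul_eq_zero.1 hdval.symm with h | h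
      · exact absurd h hfac.ne'
      · linarith
    have := congrArg Real.log heq
    rw [Real.log_mul hB.ne' hL2.ne',
        Real.log_mul (by positivity) hL1.ne',
        Real.log_mul (by positivity) hrp2.ne',
        Real.log_mul hA.ne' hrp1.ne',
        Real.log_rpow ht1, Real.log_rpow h1t] at this
    simp only [hHdef]
    linarith
  -- the derivative of H
  have step2 : ∀ t ∈ Set.Ioo (0:ℝ) 1, HasDerivAt H
      ((a-c)/t - (b-d)/(1-t) - (a+b)/(a - (a+b)*t) - (c+d)/((c+d)*t - c)) t := by
    intro t ht
    obtain ⟨ht1, ht2⟩ := ht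
    have h1t : 0 < 1 - t := by linarith
    obtain ⟨hL1, hL2⟩ := hL t ⟨ht1, ht2⟩
    have d1 : HasDerivAt (fun s : ℝ => Real.log s) t⁻¹ t := Real.hasDerivAt_log ht1.ne'
    have d2 : HasDerivAt (fun s : ℝ => Real.log (1-s)) ((1-t)⁻¹ * (-1)) t :=
      (Real.hasDerivAt_log h1t.ne').comp t (by simpa using (hasDerivAt_id t).const_sub (1:ℝ))
    have d3 : HasDerivAt (fun s : ℝ => Real.log (a - (a+b)*s)) ((a-(a+b)*t)⁻¹ * (-(a+b))) t :=
      (Real.hasDerivAt_log hL1.ne').comp (h := fun s : ℝ => a - (a+b)*s) t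
        (by simpa using ((hasDerivAt_id t).const_mul (a+b)).const_sub a)
    have d4 : HasDerivAt (fun s : ℝ => Real.log ((c+d)*s - c)) (((c+d)*t-c)⁻¹ * (c+d)) t :=
      (Real.hasDerivAt_log hL2.ne').comp (h := fun s : ℝ => (c+d)*s - c) t
        (by simpa using ((hasDerivAt_id t).const_mul (c+d)).sub_const c)
    have := (((((hasDerivAt_const t (Real.log A)).add (d1.const_mul (a-c))).add
        (d2.const_mul (b-d))).add d3).sub_const (Real.log B)).sub d4
    replace this : HasDerivAt H _ t := this
    convert this using 1
    simp only [div_eq_mul_inv]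
    ring
  -- main argument: suppose there are at least six roots
  by_contra hcon
  push_neg at hcon
  obtain ⟨s, hssub, hs6⟩ := Set.exists_subset_encard_eq hcon
  have hfin : s.Finite := Set.finite_of_encard_eq_coe (k := 6) (by exact_mod_cast hs6)
  have hcard6 : hfin.toFinset.card = 6 := by
    have := hfin.encard_eq_coe_toFinset_card
    rw [hs6] at this
    exact_mod_cast this.symm
  set x : Fin 6 → ℝ := fun i => hfin.toFinset.orderEmbOfFin hcard6 i with hxdef
  have hxmono : StrictMono x := (hfin.toFinset.orderEmbOfFin hcard6).strictMono
  have hxprop : ∀ i, x i ∈ Set.Ioo (0:ℝ) 1 ∧ f (x i) = 0 := by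
    intro i
    have : x i ∈ s := by
      have := Finset.orderEmbOfFin_mem hfin.toFinset hcard6 i
      rwa [Set.Finite.mem_toFinset] at this
    exact hssub this
  have hcontf : ∀ t ∈ Set.Ioo (0:ℝ) 1, ContinuousAt f t :=
    fun t ht => (hderiv t ht).differentiableAt.continuousAt
  obtain ⟨y, hymono, hymem, hyz⟩ := rolle_chain_aux (n := 5) hcontf x hxmono
    (fun i => (hxprop i).1) (fun i => (hxprop i).2)
  have hHy : ∀ i, H (y i) = 0 := fun i => step1 _ (hymem i) (hyz i)
  have hcontH : ∀ t ∈ Set.Ioo (0:ℝ) 1, ContinuousAt H t :=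
    fun t ht => (step2 t ht).differentiableAt.continuousAt
  obtain ⟨z, hzmono, hzmem, hzz⟩ := rolle_chain_aux (n := 4) hcontH y hymono hymem hHy
  have hz0 : ∀ i, (a-c)/(z i) - (b-d)/(1 - z i) - (a+b)/(a - (a+b)*z i)
      - (c+d)/((c+d)*z i - c) = 0 := by
    intro i
    have := (step2 (z i) (hzmem i)).deriv
    rw [hzz i] at this
    linarith [this]
  -- four distinct roots of a nonzero cubic: contradiction
  clear hHy hyz hymono hymem hxprop hxmono hcontf hcontH step1 step2 hderiv
  open Polynomial in
  set P : Polynomial ℝ :=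
      C (a-c) * ((1 - X) * ((C a - C (a+b) * X) * (C (c+d) * X - C c)))
    - C (b-d) * (X * ((C a - C (a+b) * X) * (C (c+d) * X - C c)))
    - C (a+b) * (X * ((1 - X) * (C (c+d) * X - C c)))
    - C (c+d) * (X * ((1 - X) * (C a - C (a+b) * X))) with hP
  have hPdeg : P.natDegree ≤ 3 := by
    rw [hP]; compute_degree
  have hPeval : ∀ t : ℝ, P.eval t =
      (a-c) * ((1-t) * ((a - (a+b)*t) * ((c+d)*t - c)))
    - (b-d) * (t * ((a - (a+b)*t) * ((c+d)*t - c)))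
    - (a+b) * (t * ((1-t) * ((c+d)*t - c)))
    - (c+d) * (t * ((1-t) * (a - (a+b)*t))) := by
    intro t; simp [hP]
  have hP0 : P ≠ 0 := by
    intro h0
    have := congrArg (fun q : Polynomial ℝ => q.eval 0) h0
    simp only [hPeval 0, Polynomial.eval_zero] at this
    nlinarith [mul_pos (mul_pos (show (0:ℝ) < a - c by linarith) ha)
      (show (0:ℝ) < -c by linarith)]
  have hroot : ∀ i, P.eval (z i) = 0 := by
    intro i
    obtain ⟨ht1, ht2⟩ := hzmem i
    have h1t : 0 < 1 - z i := by linarith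
    obtain ⟨hL1, hL2⟩ := hL (z i) ⟨ht1, ht2⟩
    have key : P.eval (z i) =
        ((a-c)/(z i) - (b-d)/(1 - z i) - (a+b)/(a - (a+b)*z i) - (c+d)/((c+d)*z i - c))
          * (z i * (1 - z i) * (a - (a+b)*z i) * ((c+d)*z i - c)) := by
      rw [hPeval]
      have k1 : (a-c)/(z i) * z i = a-c := div_mul_cancel₀ _ ht1.ne'
      have k2 : (b-d)/(1 - z i) * (1 - z i) = b-d := div_mul_cancel₀ _ h1t.ne'
      have k3 : (a+b)/(a - (a+b)*z i) * (a - (a+b)*z i) = a+b := div_mul_cancel₀ _ hL1.ne'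
      have k4 : (c+d)/((c+d)*z i - c) * ((c+d)*z i - c) = c+d := div_mul_cancel₀ _ hL2.ne'
      linear_combination (-((1 - z i) * (a - (a+b)*z i) * ((c+d)*z i - c))) * k1
        + (z i * (a - (a+b)*z i) * ((c+d)*z i - c)) * k2
        + (z i * (1 - z i) * ((c+d)*z i - c)) * k3
        + (z i * (1 - z i) * (a - (a+b)*z i)) * k4
    rw [key, hz0 i, zero_mul]
  have hcard : ({z 0, z 1, z 2, z 3} : Finset ℝ).card = 4 := by
    have h01 := hzmono (show (0:Fin 4) < 1 by decide)
    have h02 := hzmono (show (0:Fin 4) < 2 by decide)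
    have h03 := hzmono (show (0:Fin 4) < 3 by decide)
    have h12 := hzmono (show (1:Fin 4) < 2 by decide)
    have h13 := hzmono (show (1:Fin 4) < 3 by decide)
    have h23 := hzmono (show (2:Fin 4) < 3 by decide)
    rw [Finset.card_insert_of_notMem
          (by simp; exact ⟨h01.ne, h02.ne, h03.ne⟩),
        Finset.card_insert_of_notMem (by simp; exact ⟨h12.ne, h13.ne⟩),
        Finset.card_insert_of_notMem (by simp; exact h23.ne),
        Finset.card_singleton]
  have hzero := Polynomial.eq_zero_of_natDegree_lt_card_of_eval_eq_zero' P {z 0, z 1, z 2, z 3}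
    (by intro i hi
        simp only [Finset.mem_insert, Finset.mem_singleton] at hi
        rcases hi with rfl|rfl|rfl|rfl <;> exact hroot _)
    (by rw [hcard]; omega)
  exact hP0 hzero
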